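/- arXiv:0811.3975 — 3 statements merged into one kernel-verified Lean document; each statement's English description precedes it below -/
import Mathlib

section
/- In every stochastic reachability game with partial observation on both sides, every initial distribution δ ∈ Δ(K) is positively winning for player 1 or surely winning for player 2, and not both. -/
open scoped Classical

noncomputable section

/-- A probability distribution on a finite type, given by a nonnegative
real-valued density summing to `1`. -/
structure FDist (X : Type*) [Fintype X] where
  f : X → ℝ
  nonneg : ∀ x, 0 ≤ f x
  sum_one : ∑ x, f x = 1

/-- The support of a distribution: the set of points with positive probability. -/
def FDist.support {X : Type*} [Fintype X] (δ : FDist X) : Finset X :=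
  Finset.univ.filter fun x => 0 < δ.f x

/-- The uniform distribution on a nonempty finite set. -/
def uniform {X : Type*} [Fintype X] (L : Finset X) (hL : L.Nonempty) : FDist X where
  f x := if x ∈ L then (L.card : ℝ)⁻¹ else 0
  nonneg x := by split_ifs <;> positivity
  sum_one := by
    rw [Finset.sum_ite_mem, Finset.univ_inter, Finset.sum_const, nsmul_eq_mul,
      mul_inv_cancel₀]
    exact_mod_cast (Finset.card_pos.mpr hL).ne'

/-- Uniform distribution on `L`, defaulting to the uniform distribution on the
whole type when `L` is empty. -/
def uniformD {X : Type*} [Fintype X] [Nonempty X] (L : Finset X) : FDist X :=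
  if h : L.Nonempty then uniform L h else uniform Finset.univ Finset.univ_nonempty

/-- The Dirac distribution on a point. -/
def dirac {X : Type*} [Fintype X] (x : X) : FDist X where
  f y := if y = x then 1 else 0
  nonneg y := by by_cases h : y = x <;> simp [h]
  sum_one := by simp

/-- A stochastic game with partial observation on both sides and a reachability
objective for player 1: states `K`, actions `I`, `J`, signals `C`, `D`, target
states `T`, transition probabilities `p`, and actions encoded in signals via
`act₁`, `act₂`. -/
structure Game (K I J C D : Type*) [Fintype K] [Fintype I] [Fintype J] [Fintype C] [Fintype D] where
  T : Finset K
  p : K → I → J → C × D × K → ℝ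
  p_nonneg : ∀ k i j x, 0 ≤ p k i j x
  p_sum : ∀ k i j, ∑ x : C × D × K, p k i j x = 1
  act₁ : C → I
  act₂ : D → J
  act_compat : ∀ k i j c d l, 0 < p k i j (c, d, l) → i = act₁ c ∧ j = act₂ d

/-- A (behavioral) strategy of player 1: a distribution on actions for each
finite sequence of received signals. -/
abbrev Strategy1 (I C : Type*) [Fintype I] : Type _ := List C → FDist I

/-- A (behavioral) strategy of player 2. -/
abbrev Strategy2 (J D : Type*) [Fintype J] : Type _ := List D → FDist J

/-- A play with `n+1` states: the initial state followed by `n` steps, each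
consisting of a signal for player 1, a signal for player 2 and the next state. -/
structure Hist (K C D : Type*) (n : ℕ) where
  first : K
  steps : Fin n → C × D × K

instance (K C D : Type*) [Fintype K] [Fintype C] [Fintype D] (n : ℕ) :
    Fintype (Hist K C D n) :=
  Fintype.ofEquiv (K × (Fin n → C × D × K))
    { toFun := fun x => ⟨x.1, x.2⟩
      invFun := fun h => (h.first, h.steps)
      left_inv := fun _ => rfl
      right_inv := fun _ => rfl }

namespace Hist

variable {K C D : Type*}

/-- The last state of a play. -/
def last : ∀ {n : ℕ}, Hist K C D n → K
  | 0, h => h.first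
  | n + 1, h => (h.steps (Fin.last n)).2.2

/-- The play obtained by removing the last step. -/
def init {n : ℕ} (h : Hist K C D (n + 1)) : Hist K C D n :=
  ⟨h.first, fun m => h.steps m.castSucc⟩

/-- The `m`-th state of a play, `0`-indexed: `state h 0` is the initial state
(called `k₁` in `1`-indexed notation). -/
def state {n : ℕ} (h : Hist K C D n) (m : Fin (n + 1)) : K :=
  if hm : m.val = 0 then h.first
  else (h.steps ⟨m.val - 1, by have := m.isLt; omega⟩).2.2

/-- The sequence of signals received by player 1 along the play. -/
def sig1 {n : ℕ} (h : Hist K C D n) : List C := List.ofFn fun m => (h.steps m).1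

/-- The sequence of signals received by player 2 along the play. -/
def sig2 {n : ℕ} (h : Hist K C D n) : List D := List.ofFn fun m => (h.steps m).2.1

/-- The play visits the target set `T`. -/
def visits (T : Finset K) {n : ℕ} (h : Hist K C D n) : Prop :=
  ∃ m : Fin (n + 1), h.state m ∈ T

end Hist

namespace Game

variable {K I J C D : Type*} [Fintype K] [Fintype I] [Fintype J] [Fintype C] [Fintype D]

/-- The probability of a given play of `n` steps, under initial distribution `δ`
and strategies `σ`, `τ`. -/
def playProb (G : Game K I J C D) (δ : FDist K) (σ : Strategy1 I C) (τ : Strategy2 J D) :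
    ∀ n : ℕ, Hist K C D n → ℝ
  | 0, h => δ.f h.first
  | n + 1, h =>
      G.playProb δ σ τ n h.init *
        ∑ i : I, ∑ j : J,
          (σ h.init.sig1).f i * (τ h.init.sig2).f j *
            G.p h.init.last i j (h.steps (Fin.last n))

/-- The probability that a play with `n+1` states visits the target set. -/
def reachProb (G : Game K I J C D) (δ : FDist K) (σ : Strategy1 I C)
    (τ : Strategy2 J D) (n : ℕ) : ℝ :=
  ∑ h : Hist K C D n, if h.visits G.T then G.playProb δ σ τ n h else 0

/-- The reachability probability `γ₁(δ,σ,τ)`: the supremum over horizons of the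
probability that the play visits the target set. -/
def val (G : Game K I J C D) (δ : FDist K) (σ : Strategy1 I C) (τ : Strategy2 J D) : ℝ :=
  ⨆ n : ℕ, G.reachProb δ σ τ n

/-- `δ` is almost-surely winning for player 1. -/
def AlmostSureWin1 (G : Game K I J C D) (δ : FDist K) : Prop :=
  ∃ σ, ∀ τ, G.val δ σ τ = 1

/-- `δ` is positively winning for player 1. -/
def PositiveWin1 (G : Game K I J C D) (δ : FDist K) : Prop :=
  ∃ σ, ∀ τ, 0 < G.val δ σ τ

/-- `δ` is positively winning for player 2. -/
def PositiveWin2 (G : Game K I J C D) (δ : FDist K) : Prop :=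
  ∃ τ, ∀ σ, G.val δ σ τ < 1

/-- `δ` is surely (equivalently here, almost-surely) winning for player 2. -/
def SureWin2 (G : Game K I J C D) (δ : FDist K) : Prop :=
  ∃ τ, ∀ σ, G.val δ σ τ = 0

/-- One-step belief operator of player 1. -/
def B1 (G : Game K I J C D) (L : Finset K) (c : C) : Finset K :=
  Finset.univ.filter fun k => ∃ l ∈ L, ∃ d : D, 0 < G.p l (G.act₁ c) (G.act₂ d) (c, d, k)

/-- One-step belief operator of player 2. -/
def B2 (G : Game K I J C D) (L : Finset K) (d : D) : Finset K :=
  Finset.univ.filter fun k => ∃ l ∈ L, ∃ c : C, 0 < G.p l (G.act₁ c) (G.act₂ d) (c, d, k)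

/-- Belief of player 1 after a sequence of signals. -/
def B1seq (G : Game K I J C D) (L : Finset K) (cs : List C) : Finset K := cs.foldl G.B1 L

/-- Belief of player 2 after a sequence of signals. -/
def B2seq (G : Game K I J C D) (L : Finset K) (ds : List D) : Finset K := ds.foldl G.B2 L

/-- One-step pessimistic belief operator of player 1. -/
def B1p (G : Game K I J C D) (L : Finset K) (c : C) : Finset K := G.B1 (L \ G.T) c

/-- One-step pessimistic belief operator of player 2. -/
def B2p (G : Game K I J C D) (L : Finset K) (d : D) : Finset K := G.B2 (L \ G.T) d

/-- Pessimistic belief of player 1 after a sequence of signals. -/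
def B1pseq (G : Game K I J C D) (L : Finset K) (cs : List C) : Finset K := cs.foldl G.B1p L

/-- Pessimistic belief of player 2 after a sequence of signals. -/
def B2pseq (G : Game K I J C D) (L : Finset K) (ds : List D) : Finset K := ds.foldl G.B2p L

/-- The operator `Φ` on collections of subsets of `K ∖ T`. -/
def Phi (G : Game K I J C D) (𝓛 : Set (Finset K)) : Set (Finset K) :=
  {L | L ∈ 𝓛 ∧ L ∩ G.T = ∅ ∧ ∃ j : J, ∀ d : D, G.act₂ d = j → G.B2 L d ∈ 𝓛}

theorem Phi_mono (G : Game K I J C D) : Monotone G.Phi := by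
  intro A B hAB L hL
  obtain ⟨h1, h2, j, hj⟩ := hL
  exact ⟨hAB h1, h2, j, fun d hd => hAB (hj d hd)⟩

/-- `𝓛_∞`, the greatest fixpoint of `Φ`. -/
def Linf (G : Game K I J C D) : Set (Finset K) :=
  OrderHom.gfp ⟨G.Phi, G.Phi_mono⟩

/-- The winning condition of the `𝓛`-game for player 1, on a play with initial
support `L`: some state `k_m` is a target state and all earlier pessimistic
beliefs of player 1 avoid `𝓛`. -/
def LWin (G : Game K I J C D) (𝓛 : Set (Finset K)) (L : Finset K) {n : ℕ}
    (h : Hist K C D n) : Prop :=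
  ∃ m : Fin (n + 1), h.state m ∈ G.T ∧
    ∀ r : ℕ, 1 ≤ r → r ≤ m.val → G.B1pseq L (h.sig1.take r) ∉ 𝓛

/-- The payoff `γ₁^𝓛(δ,σ,τ)` of player 1 in the `𝓛`-game, for an initial
distribution `δ` with support `L`. -/
def Lval (G : Game K I J C D) (𝓛 : Set (Finset K)) (L : Finset K) (δ : FDist K)
    (σ : Strategy1 I C) (τ : Strategy2 J D) : ℝ :=
  ⨆ n : ℕ, ∑ h : Hist K C D n, if G.LWin 𝓛 L h then G.playProb δ σ τ n h else 0

end Game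

/-- The uniformly random strategy `σ_R` of player 1. -/
def randomStrat (I C : Type*) [Fintype I] [Nonempty I] : Strategy1 I C :=
  fun _ => uniform Finset.univ Finset.univ_nonempty
variable {K I J C D : Type*} [Fintype K] [Fintype I] [Fintype J] [Fintype C] [Fintype D]
  [Nonempty K] [Nonempty I] [Nonempty J] [Nonempty C] [Nonempty D]

namespace ForProof

/-- Histories of length `0` are just states. -/
def histZeroEquiv (K C D : Type*) : Hist K C D 0 ≃ K where
  toFun h := h.first
  invFun k := ⟨k, Fin.elim0⟩
  left_inv h := by
    cases h with
    | mk f s =>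
      simp only [Hist.mk.injEq, true_and]
      first
      | exact ⟨trivial, funext fun m => m.elim0⟩
      | exact funext fun m => m.elim0
  right_inv k := rfl

/-- Histories of length `n+1` are histories of length `n` plus one step. -/
def histSnocEquiv (K C D : Type*) (n : ℕ) :
    Hist K C D (n + 1) ≃ Hist K C D n × (C × D × K) where
  toFun h := (h.init, h.steps (Fin.last n))
  invFun gx := ⟨gx.1.first, Fin.snoc gx.1.steps gx.2⟩
  left_inv h := by
    cases h with
    | mk f s =>
      simp only [Hist.init, Hist.mk.injEq, true_and]
      funext m
      induction m using Fin.lastCases with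
      | last => simp
      | cast m => simp
  right_inv gx := by
    obtain ⟨g, x⟩ := gx
    cases g with
    | mk f s =>
      simp only [Hist.init, Fin.snoc_last, Prod.mk.injEq, Hist.mk.injEq, true_and, and_true]
      exact funext fun m => by simp

lemma init_snoc {K C D : Type*} {n : ℕ} (g : Hist K C D n) (x : C × D × K) :
    (Hist.mk g.first (Fin.snoc g.steps x) : Hist K C D (n + 1)).init = g := by
  cases g with
  | mk f s =>
    simp only [Hist.init, Hist.mk.injEq, true_and]
    exact funext fun m => by simp

lemma sum_hist_zero {K C D : Type*} [Fintype K] [Fintype C] [Fintype D]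
    (f : Hist K C D 0 → ℝ) :
    ∑ h : Hist K C D 0, f h = ∑ k : K, f ⟨k, Fin.elim0⟩ :=
  Fintype.sum_equiv (histZeroEquiv K C D) _ _
    (fun h => (congrArg f ((histZeroEquiv K C D).left_inv h)).symm)

lemma sum_hist_succ {K C D : Type*} [Fintype K] [Fintype C] [Fintype D] {n : ℕ}
    (f : Hist K C D (n + 1) → ℝ) :
    ∑ h : Hist K C D (n + 1), f h =
      ∑ g : Hist K C D n, ∑ x : C × D × K, f ⟨g.first, Fin.snoc g.steps x⟩ :=
  calc ∑ h : Hist K C D (n + 1), f h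
      = ∑ gx : Hist K C D n × (C × D × K), f ⟨gx.1.first, Fin.snoc gx.1.steps gx.2⟩ :=
        Fintype.sum_equiv (histSnocEquiv K C D n) _ _
          (fun h => (congrArg f ((histSnocEquiv K C D n).left_inv h)).symm)
    _ = _ := Fintype.sum_prod_type fun gx : Hist K C D n × (C × D × K) => f ⟨gx.1.first, Fin.snoc gx.1.steps gx.2⟩

variable {K I J C D : Type*} [Fintype K] [Fintype I] [Fintype J] [Fintype C] [Fintype D]
  [Nonempty K] [Nonempty I] [Nonempty J] [Nonempty C] [Nonempty D]

lemma playProb_nonneg (G : Game K I J C D) (δ : FDist K) (σ : Strategy1 I C)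
    (τ : Strategy2 J D) : ∀ (n : ℕ) (h : Hist K C D n), 0 ≤ G.playProb δ σ τ n h
  | 0, h => δ.nonneg h.first
  | n + 1, h => by
    simp only [Game.playProb]
    refine mul_nonneg (playProb_nonneg G δ σ τ n h.init) ?_
    refine Finset.sum_nonneg fun i _ => Finset.sum_nonneg fun j _ => ?_
    exact mul_nonneg (mul_nonneg ((σ _).nonneg i) ((τ _).nonneg j)) (G.p_nonneg _ _ _ _)

lemma sum_playProb (G : Game K I J C D) (δ : FDist K) (σ : Strategy1 I C)
    (τ : Strategy2 J D) : ∀ n : ℕ, ∑ h : Hist K C D n, G.playProb δ σ τ n h = 1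
  | 0 => by
    rw [sum_hist_zero]
    exact δ.sum_one
  | n + 1 => by
    rw [sum_hist_succ]
    have key : ∀ (l : K) (a : I → ℝ) (b : J → ℝ), (∑ i, a i = 1) → (∑ j, b j = 1) →
        ∑ x : C × D × K, ∑ i, ∑ j, a i * b j * G.p l i j x = 1 := by
      intro l a b ha hb
      rw [Finset.sum_comm]
      have h1 : ∀ i, ∑ x : C × D × K, ∑ j, a i * b j * G.p l i j x = a i := by
        intro i
        rw [Finset.sum_comm]
        have h2 : ∀ j, ∑ x : C × D × K, a i * b j * G.p l i j x = a i * b j := by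
          intro j
          rw [← Finset.mul_sum, G.p_sum, mul_one]
        rw [Finset.sum_congr rfl fun j _ => h2 j, ← Finset.mul_sum, hb, mul_one]
      rw [Finset.sum_congr rfl fun i _ => h1 i, ha]
    have step : ∀ g : Hist K C D n,
        ∑ x : C × D × K,
          G.playProb δ σ τ (n + 1) ⟨g.first, Fin.snoc g.steps x⟩ =
        G.playProb δ σ τ n g := by
      intro g
      have : ∀ x : C × D × K,
          G.playProb δ σ τ (n + 1) ⟨g.first, Fin.snoc g.steps x⟩ =
          G.playProb δ σ τ n g *
            ∑ i : I, ∑ j : J, (σ g.sig1).f i * (τ g.sig2).f j * G.p g.last i j x := by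
        intro x
        simp only [Game.playProb, init_snoc, Fin.snoc_last]
      rw [Finset.sum_congr rfl fun x _ => this x, ← Finset.mul_sum,
        key g.last _ _ (σ g.sig1).sum_one (τ g.sig2).sum_one, mul_one]
    rw [Finset.sum_congr rfl fun g _ => step g]
    exact sum_playProb G δ σ τ n

lemma randomStrat_pos (s : List C) (i : I) : 0 < ((randomStrat I C) s).f i := by
  have : 0 < (Fintype.card I : ℝ) := by
    exact_mod_cast Fintype.card_pos
  simp only [randomStrat, uniform, Finset.mem_univ, if_true, Finset.card_univ]
  exact inv_pos.mpr this

/-- If a play has positive probability against `τ` under some strategy of player 1,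
it has positive probability under the uniformly random strategy. -/
lemma playProb_pos_random (G : Game K I J C D) (δ : FDist K) (σ : Strategy1 I C)
    (τ : Strategy2 J D) : ∀ (n : ℕ) (h : Hist K C D n),
    0 < G.playProb δ σ τ n h → 0 < G.playProb δ (randomStrat I C) τ n h
  | 0, h, hp => hp
  | n + 1, h, hp => by
    simp only [Game.playProb] at hp ⊢
    have hA : 0 ≤ G.playProb δ σ τ n h.init := playProb_nonneg G δ σ τ n h.init
    have hterm : ∀ i j, (0:ℝ) ≤ (σ h.init.sig1).f i * (τ h.init.sig2).f j *
        G.p h.init.last i j (h.steps (Fin.last n)) := fun i j =>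
      mul_nonneg (mul_nonneg ((σ _).nonneg i) ((τ _).nonneg j)) (G.p_nonneg _ _ _ _)
    have hB : 0 ≤ ∑ i : I, ∑ j : J, (σ h.init.sig1).f i * (τ h.init.sig2).f j *
        G.p h.init.last i j (h.steps (Fin.last n)) :=
      Finset.sum_nonneg fun i _ => Finset.sum_nonneg fun j _ => hterm i j
    have hApos : 0 < G.playProb δ σ τ n h.init := by
      rcases mul_pos_iff.mp hp with ⟨h1, _⟩ | ⟨h1, _⟩
      · exact h1
      · exact absurd h1 (not_lt.mpr hA)
    have hBpos : 0 < ∑ i : I, ∑ j : J, (σ h.init.sig1).f i * (τ h.init.sig2).f j *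
        G.p h.init.last i j (h.steps (Fin.last n)) := by
      rcases mul_pos_iff.mp hp with ⟨_, h2⟩ | ⟨_, h2⟩
      · exact h2
      · exact absurd h2 (not_lt.mpr hB)
    refine mul_pos (playProb_pos_random G δ σ τ n h.init hApos) ?_
    -- extract a positive term
    obtain ⟨i, -, hi⟩ := Finset.exists_lt_of_sum_lt (f := fun _ => (0:ℝ))
      (by simpa using hBpos)
    obtain ⟨j, -, hj⟩ := Finset.exists_lt_of_sum_lt (f := fun _ => (0:ℝ))
      (by simpa using hi)
    have hστp : 0 < (σ h.init.sig1).f i * (τ h.init.sig2).f j ∧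
        0 < G.p h.init.last i j (h.steps (Fin.last n)) := by
      rcases mul_pos_iff.mp hj with ⟨h1, h2⟩ | ⟨h1, _⟩
      · exact ⟨h1, h2⟩
      · exact absurd h1 (not_lt.mpr
          (mul_nonneg ((σ _).nonneg i) ((τ _).nonneg j)))
    have hτj : 0 < (τ h.init.sig2).f j := by
      rcases mul_pos_iff.mp hστp.1 with ⟨_, h2⟩ | ⟨h1, _⟩
      · exact h2
      · exact absurd h1 (not_lt.mpr ((σ _).nonneg i))
    have hτp : 0 < (τ h.init.sig2).f j *
        G.p h.init.last i j (h.steps (Fin.last n)) := mul_pos hτj hστp.2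
    refine Finset.sum_pos' (fun i' _ => Finset.sum_nonneg fun j' _ =>
      mul_nonneg (mul_nonneg (le_of_lt (randomStrat_pos _ _)) ((τ _).nonneg j'))
        (G.p_nonneg _ _ _ _)) ⟨i, Finset.mem_univ i, ?_⟩
    refine Finset.sum_pos' (fun j' _ =>
      mul_nonneg (mul_nonneg (le_of_lt (randomStrat_pos _ _)) ((τ _).nonneg j'))
        (G.p_nonneg _ _ _ _)) ⟨j, Finset.mem_univ j, ?_⟩
    rw [mul_assoc]
    exact mul_pos (randomStrat_pos _ _) hτp

lemma reachProb_nonneg (G : Game K I J C D) (δ : FDist K) (σ : Strategy1 I C)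
    (τ : Strategy2 J D) (n : ℕ) : 0 ≤ G.reachProb δ σ τ n :=
  Finset.sum_nonneg fun h _ => by
    by_cases hv : h.visits G.T <;> simp [Game.reachProb, hv, playProb_nonneg G δ σ τ n h]

lemma reachProb_le_one (G : Game K I J C D) (δ : FDist K) (σ : Strategy1 I C)
    (τ : Strategy2 J D) (n : ℕ) : G.reachProb δ σ τ n ≤ 1 := by
  have : G.reachProb δ σ τ n ≤ ∑ h : Hist K C D n, G.playProb δ σ τ n h := by
    refine Finset.sum_le_sum fun h _ => ?_
    by_cases hv : h.visits G.T <;> simp [hv, playProb_nonneg G δ σ τ n h]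
  rw [sum_playProb G δ σ τ n] at this
  exact this

lemma reachProb_pos_random (G : Game K I J C D) (δ : FDist K) (σ : Strategy1 I C)
    (τ : Strategy2 J D) (n : ℕ) (hp : 0 < G.reachProb δ σ τ n) :
    0 < G.reachProb δ (randomStrat I C) τ n := by
  unfold Game.reachProb at hp ⊢
  obtain ⟨h, -, hh⟩ := Finset.exists_lt_of_sum_lt (f := fun _ => (0:ℝ))
    (by simpa using hp)
  have hv : h.visits G.T := by
    by_contra hv
    rw [if_neg hv] at hh
    exact lt_irrefl 0 hh
  rw [if_pos hv] at hh
  refine Finset.sum_pos' (fun h' _ => ?_) ⟨h, Finset.mem_univ h, ?_⟩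
  · by_cases hv' : h'.visits G.T <;>
      simp [hv', playProb_nonneg G δ (randomStrat I C) τ n h']
  · rw [if_pos hv]
    exact playProb_pos_random G δ σ τ n h hh

lemma val_bddAbove (G : Game K I J C D) (δ : FDist K) (σ : Strategy1 I C)
    (τ : Strategy2 J D) : BddAbove (Set.range fun n => G.reachProb δ σ τ n) :=
  ⟨1, by rintro _ ⟨n, rfl⟩; exact reachProb_le_one G δ σ τ n⟩

end ForProof

/-- every initial distribution is positively winning for player 1 or
surely winning for player 2, and not both. -/
theorem positive1_or_sure2 (G : Game K I J C D) (δ : FDist K) :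
    (G.PositiveWin1 δ ∨ G.SureWin2 δ) ∧ ¬(G.PositiveWin1 δ ∧ G.SureWin2 δ) := by
  constructor
  · by_cases H : ∀ τ : Strategy2 J D, ∃ n : ℕ, 0 < G.reachProb δ (randomStrat I C) τ n
    · left
      refine ⟨randomStrat I C, fun τ => ?_⟩
      obtain ⟨n, hn⟩ := H τ
      exact lt_of_lt_of_le hn (le_ciSup (ForProof.val_bddAbove G δ _ τ) n)
    · right
      push_neg at H
      obtain ⟨τ, hτ⟩ := H
      refine ⟨τ, fun σ => ?_⟩
      have hz : ∀ n, G.reachProb δ σ τ n = 0 := by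
        intro n
        by_contra hne
        have hpos : 0 < G.reachProb δ σ τ n :=
          lt_of_le_of_ne (ForProof.reachProb_nonneg G δ σ τ n) (Ne.symm hne)
        exact absurd (ForProof.reachProb_pos_random G δ σ τ n hpos)
          (not_lt.mpr (hτ n))
      have : G.val δ σ τ = ⨆ _ : ℕ, (0:ℝ) := by
        unfold Game.val
        exact congrArg _ (funext hz)
      rw [this, ciSup_const]
  · rintro ⟨⟨σ, hσ⟩, ⟨τ, hτ⟩⟩
    have h1 := hσ τ
    rw [hτ σ] at h1
    exact lt_irrefl 0 h1
end
end

section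
/- If an initial distribution δ is positively winning for player 1, then the uniformly random strategy σ_R of player 1 witnesses this: γ₁(δ,σ_R,τ) > 0 for every strategy τ of player 2. -/
open scoped Classical

noncomputable section

variable {K I J C D : Type*} [Fintype K] [Fintype I] [Fintype J] [Fintype C] [Fintype D]
  [Nonempty K] [Nonempty I] [Nonempty J] [Nonempty C] [Nonempty D]

lemma FDist.le_one' {X : Type*} [Fintype X] (δ : FDist X) (x : X) : δ.f x ≤ 1 := by
  rw [← δ.sum_one]
  exact Finset.single_le_sum (fun y _ => δ.nonneg y) (Finset.mem_univ x)

lemma playProb_nonneg (G : Game K I J C D) (δ : FDist K) (σ : Strategy1 I C)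
    (τ : Strategy2 J D) : ∀ n h, 0 ≤ G.playProb δ σ τ n h := by
  intro n
  induction n with
  | zero => intro h; exact δ.nonneg _
  | succ n ih =>
    intro h
    refine mul_nonneg (ih _) ?_
    refine Finset.sum_nonneg fun i _ => Finset.sum_nonneg fun j _ => ?_
    exact mul_nonneg (mul_nonneg ((σ _).nonneg i) ((τ _).nonneg j)) (G.p_nonneg _ _ _ _)

/-- `Hist 0` is just a state. -/
def hist0Equiv : Hist K C D 0 ≃ K where
  toFun h := h.first
  invFun k := ⟨k, Fin.elim0⟩
  left_inv := fun ⟨f, s⟩ => by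
    have hs : s = Fin.elim0 := funext fun i => i.elim0
    subst hs
    rfl
  right_inv k := rfl

/-- A history of length `n+1` is a history of length `n` plus one step. -/
def histEquiv {n : ℕ} : Hist K C D (n + 1) ≃ Hist K C D n × (C × D × K) where
  toFun h := (h.init, h.steps (Fin.last n))
  invFun x := ⟨x.1.first, Fin.snoc x.1.steps x.2⟩
  left_inv h := by
    cases h with
    | mk f s =>
      simp only [Hist.init]
      congr
      exact Fin.snoc_init_self s
  right_inv x := by
    obtain ⟨h, s⟩ := x
    simp only [Hist.init, Fin.snoc_castSucc, Fin.snoc_last]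

lemma histEquiv_symm_init {n : ℕ} (h : Hist K C D n) (s : C × D × K) :
    (histEquiv.symm (h, s) : Hist K C D (n + 1)).init = h := by
  have := histEquiv.right_inv (h, s)
  exact congrArg Prod.fst this

lemma histEquiv_symm_last {n : ℕ} (h : Hist K C D n) (s : C × D × K) :
    (histEquiv.symm (h, s) : Hist K C D (n + 1)).steps (Fin.last n) = s := by
  have := histEquiv.right_inv (h, s)
  exact congrArg Prod.snd this

lemma sum_playProb (G : Game K I J C D) (δ : FDist K) (σ : Strategy1 I C)
    (τ : Strategy2 J D) : ∀ n, ∑ h : Hist K C D n, G.playProb δ σ τ n h = 1 := by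
  intro n
  induction n with
  | zero =>
    rw [← δ.sum_one, ← Equiv.sum_comp (hist0Equiv (K := K) (C := C) (D := D)).symm]
    rfl
  | succ n ih =>
    rw [← Equiv.sum_comp (histEquiv (K := K) (C := C) (D := D) (n := n)).symm]
    rw [Fintype.sum_prod_type]
    have key : ∀ h : Hist K C D n, ∀ s : C × D × K,
        G.playProb δ σ τ (n + 1) (histEquiv.symm (h, s)) =
        G.playProb δ σ τ n h *
          ∑ i : I, ∑ j : J, (σ h.sig1).f i * (τ h.sig2).f j * G.p h.last i j s := by
      intro h s
      show G.playProb δ σ τ n (histEquiv.symm (h, s)).init * _ = _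
      rw [histEquiv_symm_init, histEquiv_symm_last]
    calc (∑ h : Hist K C D n, ∑ s : C × D × K,
            G.playProb δ σ τ (n + 1) (histEquiv.symm (h, s)))
        = ∑ h : Hist K C D n, G.playProb δ σ τ n h *
            ∑ s : C × D × K, ∑ i : I, ∑ j : J,
              (σ h.sig1).f i * (τ h.sig2).f j * G.p h.last i j s := by
          refine Finset.sum_congr rfl fun h _ => ?_
          rw [Finset.mul_sum]
          exact Finset.sum_congr rfl fun s _ => key h s
      _ = ∑ h : Hist K C D n, G.playProb δ σ τ n h := by
          refine Finset.sum_congr rfl fun h _ => ?_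
          have : (∑ s : C × D × K, ∑ i : I, ∑ j : J,
              (σ h.sig1).f i * (τ h.sig2).f j * G.p h.last i j s) = 1 := by
            rw [Finset.sum_comm]
            have : ∀ i : I, (∑ s : C × D × K, ∑ j : J,
                (σ h.sig1).f i * (τ h.sig2).f j * G.p h.last i j s) =
                (σ h.sig1).f i * ∑ j : J, (τ h.sig2).f j := by
              intro i
              rw [Finset.sum_comm, Finset.mul_sum]
              refine Finset.sum_congr rfl fun j _ => ?_
              rw [← Finset.mul_sum]
              have := G.p_sum h.last i j
              rw [mul_assoc]
              rw [show (∑ s : C × D × K, G.p h.last i j s) = 1 from this, mul_one]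
            rw [Finset.sum_congr rfl fun i _ => this i, ← Finset.sum_mul,
              (σ h.sig1).sum_one, (τ h.sig2).sum_one, one_mul]
          rw [this, mul_one]
      _ = 1 := ih

lemma randomStrat_f (cs : List C) (i : I) :
    (randomStrat I C cs).f i = (Fintype.card I : ℝ)⁻¹ := by
  simp [randomStrat, uniform, Finset.card_univ]

lemma playProb_le_random (G : Game K I J C D) (δ : FDist K) (σ : Strategy1 I C)
    (τ : Strategy2 J D) : ∀ n h, G.playProb δ σ τ n h ≤
      (Fintype.card I : ℝ) ^ n * G.playProb δ (randomStrat I C) τ n h := by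
  have hcard : (0 : ℝ) < Fintype.card I := by
    exact_mod_cast Fintype.card_pos
  intro n
  induction n with
  | zero => intro h; simp [Game.playProb]
  | succ n ih =>
    intro h
    show G.playProb δ σ τ n h.init * _ ≤ _
    have hS : (∑ i : I, ∑ j : J, (σ h.init.sig1).f i * (τ h.init.sig2).f j *
          G.p h.init.last i j (h.steps (Fin.last n))) ≤
        (Fintype.card I : ℝ) * ∑ i : I, ∑ j : J,
          (randomStrat I C h.init.sig1).f i * (τ h.init.sig2).f j *
            G.p h.init.last i j (h.steps (Fin.last n)) := by
      rw [Finset.mul_sum]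
      refine Finset.sum_le_sum fun i _ => ?_
      rw [Finset.mul_sum]
      refine Finset.sum_le_sum fun j _ => ?_
      rw [randomStrat_f]
      have h1 : (σ h.init.sig1).f i ≤ 1 := FDist.le_one' _ i
      have h2 : 0 ≤ (τ h.init.sig2).f j * G.p h.init.last i j (h.steps (Fin.last n)) :=
        mul_nonneg ((τ _).nonneg j) (G.p_nonneg _ _ _ _)
      calc (σ h.init.sig1).f i * (τ h.init.sig2).f j *
            G.p h.init.last i j (h.steps (Fin.last n))
          ≤ 1 * ((τ h.init.sig2).f j * G.p h.init.last i j (h.steps (Fin.last n))) := by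
            rw [mul_assoc]
            exact mul_le_mul_of_nonneg_right h1 h2
        _ = (Fintype.card I : ℝ) * ((Fintype.card I : ℝ)⁻¹ * (τ h.init.sig2).f j *
              G.p h.init.last i j (h.steps (Fin.last n))) := by
            field_simp
    have hSnn : (0 : ℝ) ≤ ∑ i : I, ∑ j : J, (σ h.init.sig1).f i * (τ h.init.sig2).f j *
        G.p h.init.last i j (h.steps (Fin.last n)) :=
      Finset.sum_nonneg fun i _ => Finset.sum_nonneg fun j _ =>
        mul_nonneg (mul_nonneg ((σ _).nonneg i) ((τ _).nonneg j)) (G.p_nonneg _ _ _ _)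
    have hA := ih h.init
    have hAnn : (0 : ℝ) ≤ (Fintype.card I : ℝ) ^ n *
        G.playProb δ (randomStrat I C) τ n h.init :=
      mul_nonneg (pow_nonneg hcard.le n) (playProb_nonneg _ _ _ _ _ _)
    calc G.playProb δ σ τ n h.init * _
        ≤ ((Fintype.card I : ℝ) ^ n * G.playProb δ (randomStrat I C) τ n h.init) *
            ((Fintype.card I : ℝ) * ∑ i : I, ∑ j : J,
              (randomStrat I C h.init.sig1).f i * (τ h.init.sig2).f j *
                G.p h.init.last i j (h.steps (Fin.last n))) :=
          mul_le_mul hA hS hSnn hAnn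
      _ = (Fintype.card I : ℝ) ^ (n + 1) *
            (G.playProb δ (randomStrat I C) τ n h.init * ∑ i : I, ∑ j : J,
              (randomStrat I C h.init.sig1).f i * (τ h.init.sig2).f j *
                G.p h.init.last i j (h.steps (Fin.last n))) := by ring
      _ = _ := rfl

/-- if `δ` is positively winning for player 1, then the uniformly
random strategy witnesses it. -/
theorem random_strategy_positively_wins (G : Game K I J C D) (δ : FDist K)
    (hpos : G.PositiveWin1 δ) :
    ∀ τ : Strategy2 J D, 0 < G.val δ (randomStrat I C) τ := by
  intro τ
  obtain ⟨σ, hσ⟩ := hpos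
  have hv := hσ τ
  have hcard : (0 : ℝ) < Fintype.card I := by exact_mod_cast Fintype.card_pos
  have hex : ∃ n, 0 < G.reachProb δ σ τ n := by
    by_contra hc
    push_neg at hc
    have : G.val δ σ τ ≤ 0 := Real.iSup_le hc le_rfl
    linarith
  obtain ⟨n, hn⟩ := hex
  have hle : G.reachProb δ σ τ n ≤
      (Fintype.card I : ℝ) ^ n * G.reachProb δ (randomStrat I C) τ n := by
    unfold Game.reachProb
    rw [Finset.mul_sum]
    refine Finset.sum_le_sum fun h _ => ?_
    split_ifs
    · exact playProb_le_random G δ σ τ n h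
    · simp
  have hRn : 0 < G.reachProb δ (randomStrat I C) τ n := by
    by_contra hc
    push_neg at hc
    nlinarith [pow_pos hcard n]
  have hbdd : BddAbove (Set.range (G.reachProb δ (randomStrat I C) τ)) := by
    refine ⟨1, ?_⟩
    rintro x ⟨m, rfl⟩
    calc G.reachProb δ (randomStrat I C) τ m
        ≤ ∑ h : Hist K C D m, G.playProb δ (randomStrat I C) τ m h := by
          refine Finset.sum_le_sum fun h _ => ?_
          split_ifs
          · exact le_rfl
          · exact playProb_nonneg _ _ _ _ _ _
      _ = 1 := sum_playProb _ _ _ _ _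
  exact lt_of_lt_of_le hRn (le_ciSup hbdd n)
end
end

section
/- There exists a map f : P(K) → J such that for every support L that is surely winning for player 2 and every initial distribution δ with support L, the belief strategy τ_f given by τ_f(ε) = f(L) (the Dirac distribution on the action f(L)) and τ_f(d₁,…,dₙ) = f(B₂(L,d₁,…,dₙ)) satisfies γ₁(δ,σ,τ_f) = 0 for every strategy σ of player 1. -/
open scoped Classical

noncomputable section

variable {K I J C D : Type*} [Fintype K] [Fintype I] [Fintype J] [Fintype C] [Fintype D]
  [Nonempty K] [Nonempty I] [Nonempty J] [Nonempty C] [Nonempty D]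

/-! ### Auxiliary machinery for the proof -/
set_option linter.unusedSectionVars false

namespace Hist

theorem ext' {n : ℕ} {h g : Hist K C D n} (h1 : h.first = g.first)
    (h2 : h.steps = g.steps) : h = g := by
  cases h; cases g; cases h1; cases h2; rfl

/-- Prepend a step to a history. -/
def cons {n : ℕ} (k₀ : K) (x : C × D × K) (h : Hist K C D n) : Hist K C D (n + 1) :=
  ⟨k₀, Fin.cases x h.steps⟩

@[simp] theorem cons_first {n : ℕ} (k₀ : K) (x : C × D × K) (h : Hist K C D n) :
    (cons k₀ x h).first = k₀ := rfl

@[simp] theorem cons_steps_zero {n : ℕ} (k₀ : K) (x : C × D × K) (h : Hist K C D n) :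
    (cons k₀ x h).steps 0 = x := rfl

@[simp] theorem cons_steps_succ {n : ℕ} (k₀ : K) (x : C × D × K) (h : Hist K C D n)
    (m : Fin n) : (cons k₀ x h).steps m.succ = h.steps m := by
  simp [cons]

theorem cons_init {n : ℕ} (k₀ : K) (x : C × D × K) (h : Hist K C D (n + 1)) :
    (cons k₀ x h).init = cons k₀ x h.init := by
  refine ext' rfl (funext fun m => ?_)
  induction m using Fin.cases with
  | zero => simp [init, cons]
  | succ r =>
      show (cons k₀ x h).steps (Fin.castSucc r.succ) = (cons k₀ x h.init).steps r.succ
      rw [← Fin.succ_castSucc, cons_steps_succ, cons_steps_succ]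
      rfl

@[simp] theorem sig1_cons {n : ℕ} (k₀ : K) (x : C × D × K) (h : Hist K C D n) :
    (cons k₀ x h).sig1 = x.1 :: h.sig1 := by
  simp [sig1, List.ofFn_succ]

@[simp] theorem sig2_cons {n : ℕ} (k₀ : K) (x : C × D × K) (h : Hist K C D n) :
    (cons k₀ x h).sig2 = x.2.1 :: h.sig2 := by
  simp [sig2, List.ofFn_succ]

theorem cons_steps_last {n : ℕ} (k₀ : K) (x : C × D × K) (h : Hist K C D (n + 1)) :
    (cons k₀ x h).steps (Fin.last (n + 1)) = h.steps (Fin.last n) := by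
  rw [← Fin.succ_last, cons_steps_succ]

theorem last_cons {n : ℕ} (k₀ : K) (x : C × D × K) (h : Hist K C D n)
    (hh : h.first = x.2.2) : (cons k₀ x h).last = h.last := by
  cases n with
  | zero =>
      show ((cons k₀ x h).steps (Fin.last 0)).2.2 = h.first
      rw [show Fin.last 0 = 0 from rfl, cons_steps_zero, hh]
  | succ r =>
      show ((cons k₀ x h).steps (Fin.last (r + 1))).2.2 = (h.steps (Fin.last r)).2.2
      rw [cons_steps_last]

theorem state_cons_succ {n : ℕ} (k₀ : K) (x : C × D × K) (h : Hist K C D n)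
    (hh : h.first = x.2.2) (m : Fin (n + 1)) :
    (cons k₀ x h).state m.succ = h.state m := by
  obtain ⟨mv, hm⟩ := m
  cases mv with
  | zero =>
      show (cons k₀ x h).state ⟨1, by omega⟩ = h.state ⟨0, hm⟩
      rw [state, state, dif_neg (by simp), dif_pos rfl]
      have h0 : (⟨1 - 1, by omega⟩ : Fin (n + 1)) = 0 := by ext; simp
      rw [h0, cons_steps_zero, ← hh]
  | succ r =>
      show (cons k₀ x h).state ⟨r + 2, by omega⟩ = h.state ⟨r + 1, hm⟩
      rw [state, state, dif_neg (by simp), dif_neg (by simp)]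
      have h1 : (⟨r + 2 - 1, by omega⟩ : Fin (n + 1)) =
          Fin.succ ⟨r + 1 - 1, by omega⟩ := by ext; simp
      rw [h1, cons_steps_succ]

theorem visits_cons {n : ℕ} (T : Finset K) (k₀ : K) (x : C × D × K) (h : Hist K C D n)
    (hh : h.first = x.2.2) (hv : h.visits T) : (cons k₀ x h).visits T := by
  obtain ⟨m, hm⟩ := hv
  exact ⟨m.succ, by rwa [state_cons_succ k₀ x h hh m]⟩

theorem state_succ_cases {n : ℕ} (h : Hist K C D (n + 1)) (m : Fin (n + 2)) :
    h.state m = if hm : m.val < n + 1 then h.init.state ⟨m.val, hm⟩ else h.last := by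
  obtain ⟨mv, hmlt⟩ := m
  by_cases hlt : mv < n + 1
  · rw [dif_pos hlt]
    cases mv with
    | zero => rfl
    | succ r => rfl
  · rw [dif_neg hlt]
    have hmn : mv = n + 1 := by omega
    subst hmn
    rfl

theorem sig2_succ {n : ℕ} (h : Hist K C D (n + 1)) :
    h.sig2 = h.init.sig2 ++ [(h.steps (Fin.last n)).2.1] := by
  rw [sig2, List.ofFn_succ', List.concat_eq_append]
  rfl

@[simp] theorem sig2_zero (h : Hist K C D 0) : h.sig2 = [] := by
  simp [sig2]

theorem last_zero (h : Hist K C D 0) : h.last = h.first := rfl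

/-- Appending a step at the end of a history. -/
def snoc {n : ℕ} (h : Hist K C D n) (x : C × D × K) : Hist K C D (n + 1) :=
  ⟨h.first, Fin.snoc h.steps x⟩

@[simp] theorem snoc_init {n : ℕ} (h : Hist K C D n) (x : C × D × K) :
    (snoc h x).init = h := by
  refine ext' rfl (funext fun m => ?_)
  simp [snoc, init]

@[simp] theorem snoc_steps_last {n : ℕ} (h : Hist K C D n) (x : C × D × K) :
    (snoc h x).steps (Fin.last n) = x := by
  simp [snoc]

/-- Histories of length `n+1` are pairs of a history of length `n` and a final step. -/
def snocEquiv (n : ℕ) : Hist K C D (n + 1) ≃ Hist K C D n × (C × D × K) where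
  toFun h := (h.init, h.steps (Fin.last n))
  invFun p := snoc p.1 p.2
  left_inv h := by
    refine ext' rfl (funext fun m => ?_)
    induction m using Fin.lastCases with
    | last => simp [snoc]
    | cast r => simp [snoc, init]
  right_inv p := by
    obtain ⟨g, x⟩ := p
    simp [snoc_init, snoc_steps_last]

/-- Histories of length `0` are just states. -/
def zeroEquiv : Hist K C D 0 ≃ K where
  toFun h := h.first
  invFun k := ⟨k, Fin.elim0⟩
  left_inv h := ext' rfl (funext fun m => m.elim0)
  right_inv k := rfl

end Hist

namespace Game

variable (G : Game K I J C D)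

theorem playProb_nonneg (δ : FDist K) (σ : Strategy1 I C) (τ : Strategy2 J D) :
    ∀ (n : ℕ) (h : Hist K C D n), 0 ≤ G.playProb δ σ τ n h := by
  intro n
  induction n with
  | zero => intro h; exact δ.nonneg _
  | succ n IH =>
      intro h
      refine mul_nonneg (IH h.init) ?_
      refine Finset.sum_nonneg fun i _ => Finset.sum_nonneg fun j _ => ?_
      exact mul_nonneg (mul_nonneg ((σ _).nonneg _) ((τ _).nonneg _)) (G.p_nonneg _ _ _ _)

theorem sum_playProb (δ : FDist K) (σ : Strategy1 I C) (τ : Strategy2 J D) :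
    ∀ n : ℕ, ∑ h : Hist K C D n, G.playProb δ σ τ n h = 1 := by
  intro n
  induction n with
  | zero =>
      rw [← Equiv.sum_comp ((Hist.zeroEquiv (K := K) (C := C) (D := D))).symm fun h => G.playProb δ σ τ 0 h]
      exact δ.sum_one
  | succ n IH =>
      rw [← Equiv.sum_comp ((Hist.snocEquiv (K := K) (C := C) (D := D) n)).symm fun h => G.playProb δ σ τ (n+1) h,
        Fintype.sum_prod_type]
      have hone : ∀ g : Hist K C D n,
          ∑ x : C × D × K, ∑ i : I, ∑ j : J,
            (σ g.sig1).f i * (τ g.sig2).f j * G.p g.last i j x = 1 := by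
        intro g
        rw [Finset.sum_comm]
        have : ∀ i : I, ∑ x : C × D × K, ∑ j : J,
            (σ g.sig1).f i * (τ g.sig2).f j * G.p g.last i j x
            = (σ g.sig1).f i := by
          intro i
          rw [Finset.sum_comm]
          have : ∀ j : J, ∑ x : C × D × K,
              (σ g.sig1).f i * (τ g.sig2).f j * G.p g.last i j x
              = (σ g.sig1).f i * (τ g.sig2).f j := by
            intro j
            rw [← Finset.mul_sum, G.p_sum, mul_one]
          rw [Finset.sum_congr rfl fun j _ => this j, ← Finset.mul_sum, (τ _).sum_one, mul_one]
        rw [Finset.sum_congr rfl fun i _ => this i, (σ _).sum_one]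
      calc ∑ g : Hist K C D n, ∑ x : C × D × K,
            G.playProb δ σ τ (n + 1) (((Hist.snocEquiv (K := K) (C := C) (D := D) n)).symm (g, x))
          = ∑ g : Hist K C D n, G.playProb δ σ τ n g *
              (∑ x : C × D × K, ∑ i : I, ∑ j : J,
                (σ g.sig1).f i * (τ g.sig2).f j * G.p g.last i j x) := by
            refine Finset.sum_congr rfl fun g _ => ?_
            rw [Finset.mul_sum]
            refine Finset.sum_congr rfl fun x _ => ?_
            show G.playProb δ σ τ (n+1) (Hist.snoc g x) = _
            rw [show G.playProb δ σ τ (n+1) (Hist.snoc g x)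
                = G.playProb δ σ τ n (Hist.snoc g x).init *
                  ∑ i : I, ∑ j : J, (σ (Hist.snoc g x).init.sig1).f i *
                    (τ (Hist.snoc g x).init.sig2).f j *
                    G.p (Hist.snoc g x).init.last i j ((Hist.snoc g x).steps (Fin.last n))
              from rfl, Hist.snoc_init, Hist.snoc_steps_last]
        _ = ∑ g : Hist K C D n, G.playProb δ σ τ n g * 1 :=
            Finset.sum_congr rfl fun g _ => by rw [hone g]
        _ = 1 := by
            rw [Finset.sum_congr rfl fun g (_ : g ∈ Finset.univ) => mul_one _, IH]

theorem reachProb_nonneg (δ : FDist K) (σ : Strategy1 I C) (τ : Strategy2 J D) (n : ℕ) :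
    0 ≤ G.reachProb δ σ τ n := by
  rw [Game.reachProb]
  refine Finset.sum_nonneg fun h _ => ?_
  split_ifs
  · exact G.playProb_nonneg δ σ τ n h
  · exact le_rfl

theorem reachProb_le_one (δ : FDist K) (σ : Strategy1 I C) (τ : Strategy2 J D) (n : ℕ) :
    G.reachProb δ σ τ n ≤ 1 := by
  rw [Game.reachProb, ← G.sum_playProb δ σ τ n]
  refine Finset.sum_le_sum fun h _ => ?_
  split_ifs
  · exact le_rfl
  · exact G.playProb_nonneg δ σ τ n h

theorem reachProb_eq_zero_of_val (δ : FDist K) (σ : Strategy1 I C) (τ : Strategy2 J D)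
    (hval : G.val δ σ τ = 0) (n : ℕ) : G.reachProb δ σ τ n = 0 := by
  have hb : BddAbove (Set.range fun n => G.reachProb δ σ τ n) := by
    refine ⟨1, ?_⟩
    rintro x ⟨m, rfl⟩
    exact G.reachProb_le_one δ σ τ m
  have h1 : G.reachProb δ σ τ n ≤ G.val δ σ τ := le_ciSup hb n
  rw [hval] at h1
  exact le_antisymm h1 (G.reachProb_nonneg δ σ τ n)

theorem reachProb_pos_of_term (δ : FDist K) (σ : Strategy1 I C) (τ : Strategy2 J D)
    (n : ℕ) (h : Hist K C D n) (hv : h.visits G.T) (hp : 0 < G.playProb δ σ τ n h) :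
    0 < G.reachProb δ σ τ n := by
  rw [Game.reachProb]
  refine lt_of_lt_of_le ?_ (Finset.single_le_sum
    (f := fun g : Hist K C D n => if g.visits G.T then G.playProb δ σ τ n g else 0)
    (fun g _ => by split_ifs; exacts [G.playProb_nonneg δ σ τ n g, le_rfl])
    (Finset.mem_univ h))
  rw [if_pos hv]
  exact hp

theorem exists_visit_of_reachProb_pos (δ : FDist K) (σ : Strategy1 I C) (τ : Strategy2 J D)
    (n : ℕ) (hpos : 0 < G.reachProb δ σ τ n) :
    ∃ h : Hist K C D n, h.visits G.T ∧ 0 < G.playProb δ σ τ n h := by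
  by_contra hc
  push_neg at hc
  have : G.reachProb δ σ τ n ≤ 0 := by
    rw [Game.reachProb]
    refine Finset.sum_nonpos fun h _ => ?_
    split_ifs with hv
    · exact hc h hv
    · exact le_rfl
  linarith

theorem playProb_factor (δ : FDist K) (σ : Strategy1 I C) (τ : Strategy2 J D) :
    ∀ (n : ℕ) (h : Hist K C D n),
      G.playProb δ σ τ n h = δ.f h.first * G.playProb (dirac h.first) σ τ n h := by
  intro n
  induction n with
  | zero =>
      intro h
      show δ.f h.first = δ.f h.first * (dirac h.first).f h.first
      simp [dirac]
  | succ n IH =>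
      intro h
      show G.playProb δ σ τ n h.init * _ = δ.f h.first *
        (G.playProb (dirac h.first) σ τ n h.init * _)
      rw [IH h.init]
      show δ.f h.first * G.playProb (dirac h.first) σ τ n h.init * _
        = δ.f h.first * (G.playProb (dirac h.first) σ τ n h.init * _)
      ring

theorem playProb_cons (δ : FDist K) (σ : Strategy1 I C) (τ : Strategy2 J D) :
    ∀ (n : ℕ) (k₀ : K) (x : C × D × K) (h : Hist K C D n), h.first = x.2.2 →
      G.playProb δ σ τ (n + 1) (Hist.cons k₀ x h) =
        δ.f k₀ * (∑ i : I, ∑ j : J, (σ []).f i * (τ []).f j * G.p k₀ i j x) *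
          G.playProb (dirac h.first) (fun cs => σ (x.1 :: cs)) (fun ds => τ (x.2.1 :: ds)) n h := by
  intro n
  induction n with
  | zero =>
      intro k₀ x h hh
      show G.playProb δ σ τ 0 (Hist.cons k₀ x h).init *
          (∑ i : I, ∑ j : J, (σ (Hist.cons k₀ x h).init.sig1).f i *
            (τ (Hist.cons k₀ x h).init.sig2).f j *
            G.p (Hist.cons k₀ x h).init.last i j ((Hist.cons k₀ x h).steps (Fin.last 0)))
        = _
      have h1 : (Hist.cons k₀ x h).init.sig1 = [] := by simp [Hist.sig1]
      have h2 : (Hist.cons k₀ x h).init.sig2 = [] := by simp [Hist.sig2]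
      have h3 : (Hist.cons k₀ x h).init.last = k₀ := rfl
      have h4 : (Hist.cons k₀ x h).steps (Fin.last 0) = x := rfl
      have h5 : G.playProb δ σ τ 0 (Hist.cons k₀ x h).init = δ.f k₀ := rfl
      rw [h1, h2, h3, h4, h5]
      show _ = _ * ((dirac h.first).f h.first)
      simp [dirac]
  | succ n IH =>
      intro k₀ x h hh
      show G.playProb δ σ τ (n + 1) (Hist.cons k₀ x h).init *
          (∑ i : I, ∑ j : J, (σ (Hist.cons k₀ x h).init.sig1).f i *
            (τ (Hist.cons k₀ x h).init.sig2).f j *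
            G.p (Hist.cons k₀ x h).init.last i j ((Hist.cons k₀ x h).steps (Fin.last (n + 1))))
        = δ.f k₀ * _ *
          (G.playProb (dirac h.first) (fun cs => σ (x.1 :: cs)) (fun ds => τ (x.2.1 :: ds)) n h.init *
            (∑ i : I, ∑ j : J, ((fun cs => σ (x.1 :: cs)) h.init.sig1).f i *
              ((fun ds => τ (x.2.1 :: ds)) h.init.sig2).f j *
              G.p h.init.last i j (h.steps (Fin.last n))))
      have hif : h.init.first = x.2.2 := hh
      rw [Hist.cons_init, IH k₀ x h.init hif, Hist.sig1_cons, Hist.sig2_cons,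
        Hist.last_cons k₀ x h.init hif,
        show (Hist.cons k₀ x h).steps (Fin.last (n + 1)) = h.steps (Fin.last n) from
          Hist.cons_steps_last k₀ x h]
      have hfi : (dirac h.init.first : FDist K) = dirac h.first := rfl
      rw [hfi]
      show δ.f k₀ * _ * G.playProb (dirac h.first) _ _ n h.init * _ = _
      have hil : h.init.last = (Hist.cons k₀ x h).init.last := by
        rw [Hist.cons_init, Hist.last_cons k₀ x h.init hif]
      ring

/-- A support is nonempty and surely winning for player 2. -/
def SW (L : Finset K) : Prop :=
  ∃ hL : L.Nonempty, G.SureWin2 (uniform L hL)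

end Game

section SWlemmas

variable (G : Game K I J C D)

theorem pos_of_mul3 {a b c : ℝ} (ha : 0 ≤ a) (hb : 0 ≤ b) (hc : 0 ≤ c)
    (h : 0 < a * b * c) : 0 < a ∧ 0 < b ∧ 0 < c := by
  have ha' : a ≠ 0 := fun h0 => by rw [h0] at h; simp at h
  have hb' : b ≠ 0 := fun h0 => by rw [h0] at h; simp at h
  have hc' : c ≠ 0 := fun h0 => by rw [h0] at h; simp at h
  exact ⟨ha.lt_of_ne (Ne.symm ha'), hb.lt_of_ne (Ne.symm hb'), hc.lt_of_ne (Ne.symm hc')⟩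

theorem uniform_pos {L : Finset K} (hL : L.Nonempty) {k : K} (hk : k ∈ L) :
    0 < (uniform L hL).f k := by
  have : (uniform L hL).f k = (L.card : ℝ)⁻¹ := by simp [uniform, hk]
  rw [this]
  have : 0 < L.card := Finset.card_pos.mpr hL
  positivity

theorem mem_of_uniform_pos {L : Finset K} (hL : L.Nonempty) {k : K}
    (hk : 0 < (uniform L hL).f k) : k ∈ L := by
  by_contra hc
  simp [uniform, hc] at hk

theorem SW_not_target [Nonempty I] {L : Finset K} (hSW : G.SW L) : ∀ k ∈ L, k ∉ G.T := by
  obtain ⟨hL, τ, hτ⟩ := hSW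
  intro k hk hkT
  have h0 := G.reachProb_eq_zero_of_val _ (randomStrat I C) τ (hτ (randomStrat I C)) 0
  have hterm : 0 < G.reachProb (uniform L hL) (randomStrat I C) τ 0 := by
    refine G.reachProb_pos_of_term _ _ _ 0 ⟨k, Fin.elim0⟩ ?_ ?_
    · refine ⟨0, ?_⟩
      show k ∈ G.T
      exact hkT
    · exact uniform_pos hL hk
  linarith

theorem SW_step [Nonempty I] {L : Finset K} (hSW : G.SW L) :
    ∃ j : J, ∀ d : D, G.act₂ d = j → (G.B2 L d).Nonempty → G.SW (G.B2 L d) := by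
  obtain ⟨hL, τ, hτ⟩ := hSW
  obtain ⟨j, hj⟩ : ∃ j : J, 0 < (τ []).f j := by
    by_contra hc
    push_neg at hc
    have : ∑ j : J, (τ []).f j ≤ 0 := Finset.sum_nonpos fun j _ => hc j
    rw [(τ []).sum_one] at this
    linarith
  refine ⟨j, fun d hd hM => ⟨hM, fun ds => τ (d :: ds), fun σ' => ?_⟩⟩
  set M := G.B2 L d with hMdef
  set τ' : Strategy2 J D := fun ds => τ (d :: ds) with hτ'
  have hreach : ∀ n, G.reachProb (uniform M hM) σ' τ' n = 0 := by
    intro n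
    by_contra hne
    have hpos : 0 < G.reachProb (uniform M hM) σ' τ' n :=
      (G.reachProb_nonneg _ _ _ n).lt_of_ne (Ne.symm hne)
    obtain ⟨h, hvis, hplay⟩ := G.exists_visit_of_reachProb_pos _ _ _ n hpos
    rw [G.playProb_factor] at hplay
    have hpd : 0 < G.playProb (dirac h.first) σ' τ' n h := by
      rcases mul_pos_iff.mp hplay with ⟨h1, h2⟩ | ⟨h1, h2⟩
      · exact h2
      · exact absurd h2 (not_lt.mpr (G.playProb_nonneg _ _ _ _ _))
    have hu : 0 < (uniform M hM).f h.first := by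
      rcases mul_pos_iff.mp hplay with ⟨h1, h2⟩ | ⟨h1, h2⟩
      · exact h1
      · exact absurd h2 (not_lt.mpr (G.playProb_nonneg _ _ _ _ _))
    have hfM : h.first ∈ M := mem_of_uniform_pos hM hu
    rw [hMdef, Game.B2, Finset.mem_filter] at hfM
    obtain ⟨-, l, hl, c, hp⟩ := hfM
    set σ : Strategy1 I C := fun cs =>
      match cs with
      | [] => uniform Finset.univ Finset.univ_nonempty
      | _ :: cs' => σ' cs' with hσ
    have hσc : (fun cs => σ (c :: cs)) = σ' := rfl
    have hτd : (fun ds => τ (d :: ds)) = τ' := rfl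
    have hcons := G.playProb_cons (uniform L hL) σ τ n l (c, d, h.first) h rfl
    rw [hσc, hτd] at hcons
    have hstep : 0 < ∑ i : I, ∑ j' : J, (σ []).f i * (τ []).f j' * G.p l i j' (c, d, h.first) := by
      have hterm : 0 < (σ []).f (G.act₁ c) * (τ []).f (G.act₂ d) *
          G.p l (G.act₁ c) (G.act₂ d) (c, d, h.first) := by
        refine mul_pos (mul_pos ?_ ?_) hp
        · exact uniform_pos Finset.univ_nonempty (Finset.mem_univ _)
        · rw [hd]; exact hj
      have h1 : (σ []).f (G.act₁ c) * (τ []).f (G.act₂ d) *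
            G.p l (G.act₁ c) (G.act₂ d) (c, d, h.first)
          ≤ ∑ j' : J, (σ []).f (G.act₁ c) * (τ []).f j' * G.p l (G.act₁ c) j' (c, d, h.first) :=
        Finset.single_le_sum
          (f := fun j' => (σ []).f (G.act₁ c) * (τ []).f j' * G.p l (G.act₁ c) j' (c, d, h.first))
          (fun j' _ => mul_nonneg (mul_nonneg ((σ []).nonneg _)
            ((τ []).nonneg _)) (G.p_nonneg _ _ _ _)) (Finset.mem_univ (G.act₂ d))
      have h2 : ∑ j' : J, (σ []).f (G.act₁ c) * (τ []).f j' * G.p l (G.act₁ c) j' (c, d, h.first)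
          ≤ ∑ i : I, ∑ j' : J, (σ []).f i * (τ []).f j' * G.p l i j' (c, d, h.first) :=
        Finset.single_le_sum
          (f := fun i => ∑ j' : J, (σ []).f i * (τ []).f j' * G.p l i j' (c, d, h.first))
          (fun i _ => Finset.sum_nonneg fun j' _ =>
            mul_nonneg (mul_nonneg ((σ []).nonneg _) ((τ []).nonneg _)) (G.p_nonneg _ _ _ _))
          (Finset.mem_univ (G.act₁ c))
      linarith
    have hplaypos : 0 < G.playProb (uniform L hL) σ τ (n + 1) (Hist.cons l (c, d, h.first) h) := by
      rw [hcons]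
      exact mul_pos (mul_pos (uniform_pos hL hl) hstep) hpd
    have hvis' : (Hist.cons l (c, d, h.first) h).visits G.T :=
      Hist.visits_cons G.T l (c, d, h.first) h rfl hvis
    have hrp : 0 < G.reachProb (uniform L hL) σ τ (n + 1) :=
      G.reachProb_pos_of_term _ _ _ (n + 1) _ hvis' hplaypos
    have := G.reachProb_eq_zero_of_val _ σ τ (hτ σ) (n + 1)
    linarith
  show (⨆ n : ℕ, G.reachProb (uniform M hM) σ' τ' n) = 0
  simp only [hreach, ciSup_const]

theorem B2seq_append_singleton (L : Finset K) (ds : List D) (d : D) :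
    G.B2seq L (ds ++ [d]) = G.B2 (G.B2seq L ds) d := by
  simp [Game.B2seq, List.foldl_append]

end SWlemmas

/-- there is a map `f : P(K) → J` such that the induced belief
strategy of player 2 is surely winning from every surely winning support. -/
theorem belief_strategy_surely_wins (G : Game K I J C D) :
    ∃ f : Finset K → J,
      ∀ (L : Finset K) (hL : L.Nonempty),
        G.SureWin2 (uniform L hL) →
        ∀ δ : FDist K, δ.support = L →
          ∀ σ : Strategy1 I C,
            G.val δ σ (fun ds => dirac (f (G.B2seq L ds))) = 0 := by
  classical
  refine ⟨fun L => if h : G.SW L then (SW_step G h).choose else Classical.arbitrary J, ?_⟩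
  intro L hL hwin δ hδ σ
  set f : Finset K → J :=
    fun L => if h : G.SW L then (SW_step G h).choose else Classical.arbitrary J with hf
  have hSWL : G.SW L := ⟨hL, hwin⟩
  set τf : Strategy2 J D := fun ds => dirac (f (G.B2seq L ds)) with hτf
  have inv : ∀ (n : ℕ) (h : Hist K C D n), 0 < G.playProb δ σ τf n h →
      G.SW (G.B2seq L h.sig2) ∧ h.last ∈ G.B2seq L h.sig2 ∧ ¬ h.visits G.T := by
    intro n
    induction n with
    | zero =>
        intro h hp
        have h1 : h.first ∈ L := by
          rw [← hδ, FDist.support, Finset.mem_filter]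
          exact ⟨Finset.mem_univ _, hp⟩
        rw [Hist.sig2_zero]
        have hB : G.B2seq L [] = L := rfl
        rw [hB, Hist.last_zero]
        refine ⟨hSWL, h1, ?_⟩
        rintro ⟨m, hm⟩
        obtain ⟨mv, hmv⟩ := m
        have hmv0 : mv = 0 := by omega
        subst hmv0
        rw [Hist.state, dif_pos rfl] at hm
        exact SW_not_target G hSWL h.first h1 hm
    | succ n IH =>
        intro h hp
        have hdecomp : G.playProb δ σ τf (n + 1) h = G.playProb δ σ τf n h.init *
            ∑ i : I, ∑ j : J, (σ h.init.sig1).f i * (τf h.init.sig2).f j *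
              G.p h.init.last i j (h.steps (Fin.last n)) := rfl
        rw [hdecomp] at hp
        have hSnn : 0 ≤ ∑ i : I, ∑ j : J, (σ h.init.sig1).f i * (τf h.init.sig2).f j *
            G.p h.init.last i j (h.steps (Fin.last n)) :=
          Finset.sum_nonneg fun i _ => Finset.sum_nonneg fun j _ =>
            mul_nonneg (mul_nonneg ((σ _).nonneg _) ((τf _).nonneg _)) (G.p_nonneg _ _ _ _)
        obtain ⟨hp1, hp2⟩ := (mul_pos_iff.mp hp).resolve_right fun hcon =>
          absurd hSnn (not_le.mpr hcon.2)
        obtain ⟨hSWM, hlastM, hnv⟩ := IH h.init hp1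
        set M := G.B2seq L h.init.sig2 with hMdef
        set x := h.steps (Fin.last n) with hxdef
        obtain ⟨i, -, hi⟩ := Finset.exists_lt_of_sum_lt (f := fun _ : I => (0 : ℝ))
          (by simpa using hp2)
        obtain ⟨jj, -, hij⟩ := Finset.exists_lt_of_sum_lt (f := fun _ : J => (0 : ℝ))
          (by simpa using hi)
        obtain ⟨hσp, hτp, hpp⟩ := pos_of_mul3 ((σ _).nonneg _) ((τf _).nonneg _)
          (G.p_nonneg _ _ _ _) (by simpa using hij)
        have hjj : jj = f M := by
          by_contra hne
          rw [hτf] at hτp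
          simp only [dirac] at hτp
          rw [if_neg hne] at hτp
          exact absurd hτp (lt_irrefl 0)
        have hx : x = (x.1, x.2.1, x.2.2) := rfl
        have hact := G.act_compat h.init.last i jj x.1 x.2.1 x.2.2 (by rwa [← hx])
        have hk : x.2.2 ∈ G.B2 M x.2.1 := by
          rw [Game.B2, Finset.mem_filter]
          refine ⟨Finset.mem_univ _, h.init.last, hlastM, x.1, ?_⟩
          rw [← hact.1, ← hact.2]
          rwa [← hx]
        have hfM : f M = (SW_step G hSWM).choose := by
          simp only [hf]
          rw [dif_pos hSWM]
        have hact2 : G.act₂ x.2.1 = (SW_step G hSWM).choose := by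
          rw [← hact.2, hjj, hfM]
        have hSW2 : G.SW (G.B2 M x.2.1) :=
          (SW_step G hSWM).choose_spec x.2.1 hact2 ⟨x.2.2, hk⟩
        have hsig : h.sig2 = h.init.sig2 ++ [x.2.1] := Hist.sig2_succ h
        have hB : G.B2seq L h.sig2 = G.B2 M x.2.1 := by
          rw [hsig, B2seq_append_singleton]
        have hlast : h.last = x.2.2 := rfl
        refine ⟨hB ▸ hSW2, ?_, ?_⟩
        · rw [hB, hlast]; exact hk
        · rintro ⟨m, hm⟩
          rw [Hist.state_succ_cases h m] at hm
          by_cases hmlt : m.val < n + 1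
          · rw [dif_pos hmlt] at hm
            exact hnv ⟨⟨m.val, hmlt⟩, hm⟩
          · rw [dif_neg hmlt] at hm
            rw [hlast] at hm
            exact SW_not_target G hSW2 x.2.2 hk hm
  have hreach : ∀ n, G.reachProb δ σ τf n = 0 := by
    intro n
    refine le_antisymm ?_ (G.reachProb_nonneg δ σ τf n)
    rw [Game.reachProb]
    refine Finset.sum_nonpos fun h _ => ?_
    split_ifs with hv
    · by_contra hc
      push_neg at hc
      exact absurd hv (inv n h hc).2.2
    · exact le_rfl
  show (⨆ n : ℕ, G.reachProb δ σ τf n) = 0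
  simp only [hreach, ciSup_const]
end
end
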